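/- Suppose z* = (p*, q*) ∈ Z₁ × ⋯ × Z_N together with componentwise-nonnegative multipliers μ̲*, μ̄* ∈ ℝᴺ satisfies the KKT conditions of the relaxed problem (P3): (a) v̲ ≤ v̂(z*) ≤ v̄; (b) ⟨μ̲*, v̂(z*) − v̲⟩ = 0 and ⟨μ̄*, v̄ − v̂(z*)⟩ = 0; (c) for all (p, q) ∈ Z₁ × ⋯ × Z_N, ⟨∇_p F(z*) − Rᵀ(μ̲* − μ̄*), p − p*⟩ + ⟨∇_q F(z*) − Xᵀ(μ̲* − μ̄*), q − q*⟩ ≥ 0. Define the incentive signals α* := Rᵀ(μ̲* − μ̄* − γ∇D(v̂(z*))) and β* := Xᵀ(μ̲* − μ̄* − γ∇D(v̂(z*))). Then: (i) for every i, (p*ᵢ, q*ᵢ) = bᵢ(α*ᵢ, β*ᵢ), i.e. (p*ᵢ, q*ᵢ) is the unique minimizer over Zᵢ of (p, q) ↦ Cᵢ(p, q) − α*ᵢ p − β*ᵢ q; and (ii) for every (p, q) ∈ Z₁ × ⋯ × Z_N and every (α, β) ∈ ℝᴺ × ℝᴺ such that v̲ ≤ v̂(p,q) ≤ v̄ and (pᵢ,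 qᵢ) = bᵢ(αᵢ, βᵢ) for all i, one has F(z*) ≤ F(p, q). In other words, (z*, α*, β*) is a global optimum of the non-convex problem (P2), so the convex relaxation (P3) is exact. -/

import Mathlib

open scoped InnerProductSpace Matrix

/-- The voltage map `v̂(p, q) = R p + X q + a`. -/
noncomputable def voltageMap {N : ℕ} (R X : Matrix (Fin N) (Fin N) ℝ)
    (a : EuclideanSpace ℝ (Fin N)) (p q : EuclideanSpace ℝ (Fin N)) :
    EuclideanSpace ℝ (Fin N) :=
  Matrix.toEuclideanLin R p + Matrix.toEuclideanLin X q + a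

/-- The social objective `F(p, q) = Σᵢ Cᵢ(pᵢ, qᵢ) + γ D(v̂(p, q))`. -/
noncomputable def socialObj {N : ℕ} (C : Fin N → EuclideanSpace ℝ (Fin 2) → ℝ)
    (D : EuclideanSpace ℝ (Fin N) → ℝ) (γ : ℝ) (R X : Matrix (Fin N) (Fin N) ℝ)
    (a : EuclideanSpace ℝ (Fin N)) (p q : EuclideanSpace ℝ (Fin N)) : ℝ :=
  (∑ i, C i !₂[p i, q i]) + γ * D (voltageMap R X a p q)

lemma convex_grad_ineq {E : Type*} [NormedAddCommGroup E] [InnerProductSpace ℝ E]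
    [CompleteSpace E]
    {f : E → ℝ} {g x : E} (hc : ConvexOn ℝ Set.univ f) (hg : HasGradientAt f g x)
    (y : E) : f x + ⟪g, y - x⟫_ℝ ≤ f y := by
  set h : ℝ → ℝ := fun t => f (x + t • (y - x)) with hh
  have hconv : ConvexOn ℝ Set.univ h := by
    have h2 := hc.comp_affineMap (AffineMap.lineMap x y)
    have h3 : (f ∘ (AffineMap.lineMap x y)) = h := by
      funext t
      have : (AffineMap.lineMap x y) t = x + t • (y - x) := by
        simp [AffineMap.lineMap_apply]; abel
      simp [this, h]
    rw [h3] at h2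
    simpa using h2
  have hF := hasGradientAt_iff_hasFDerivAt.mp hg
  have hl : HasDerivAt (fun t : ℝ => x + t • (y - x)) (y - x) 0 := by
    simpa using ((hasDerivAt_id (0 : ℝ)).smul_const (y - x)).const_add x
  have hx0 : x + (0 : ℝ) • (y - x) = x := by simp
  have hd : HasDerivAt h ⟪g, y - x⟫_ℝ 0 := by
    have hF' : HasFDerivAt f ((InnerProductSpace.toDual ℝ E) g) (x + (0:ℝ) • (y - x)) := by
      rwa [hx0]
    have := hF'.comp_hasDerivAt (0 : ℝ) hl
    exact (by simpa [h, Function.comp, InnerProductSpace.toDual_apply_apply] using this :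
      HasDerivAt (f ∘ fun t : ℝ => x + t • (y - x)) ⟪g, y - x⟫_ℝ 0)
  have hs := hconv.le_slope_of_hasDerivAt (Set.mem_univ 0) (Set.mem_univ 1) one_pos hd
  have h1 : h 1 = f y := by simp [h]
  have h0 : h 0 = f x := by simp [h]
  rw [slope_def_field] at hs
  simp [h1, h0] at hs
  linarith

lemma convex_grad_ineq' {n : ℕ} {f : EuclideanSpace ℝ (Fin n) → ℝ}
    {g x : EuclideanSpace ℝ (Fin n)} (hc : ConvexOn ℝ Set.univ f)
    (hg : HasGradientAt f g x) (y : EuclideanSpace ℝ (Fin n)) :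
    f x + ∑ j, g j * (y j - x j) ≤ f y := by
  have := convex_grad_ineq hc hg y
  simpa [PiLp.inner_apply, RCLike.inner_apply, starRingEnd_apply, PiLp.sub_apply, mul_comm] using this

lemma toEL_apply {n m : ℕ} (M : Matrix (Fin m) (Fin n) ℝ) (v : EuclideanSpace ℝ (Fin n))
    (j : Fin m) : Matrix.toEuclideanLin M v j = ∑ k, M j k * v k := rfl

lemma pairing {N : ℕ} (M : Matrix (Fin N) (Fin N) ℝ) (u w w' : EuclideanSpace ℝ (Fin N)) :
    ∑ i, Matrix.toEuclideanLin Mᵀ u i * (w i - w' i)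
      = ∑ j, u j * (Matrix.toEuclideanLin M w j - Matrix.toEuclideanLin M w' j) := by
  simp only [toEL_apply, Matrix.transpose_apply]
  simp only [Finset.sum_mul]
  rw [Finset.sum_comm]
  refine Finset.sum_congr rfl fun j _ => ?_
  rw [← Finset.sum_sub_distrib, Finset.mul_sum]
  exact Finset.sum_congr rfl fun i _ => by ring

lemma pairing_v {N : ℕ} (R X : Matrix (Fin N) (Fin N) ℝ)
    (a u p q ps qs : EuclideanSpace ℝ (Fin N)) :
    (∑ i, Matrix.toEuclideanLin Rᵀ u i * (p i - ps i))
      + (∑ i, Matrix.toEuclideanLin Xᵀ u i * (q i - qs i))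
      = ∑ j, u j * (voltageMap R X a p q j - voltageMap R X a ps qs j) := by
  rw [pairing R u p ps, pairing X u q qs, ← Finset.sum_add_distrib]
  refine Finset.sum_congr rfl fun j _ => ?_
  simp only [voltageMap, PiLp.add_apply]
  ring

/-- `w` is a minimizer over `Zᵢ` of the incentivized cost `Cᵢ(p,q) − α p − β q`. -/
def IsBestResponse {N : ℕ} (Z : Fin N → Set (EuclideanSpace ℝ (Fin 2)))
    (C : Fin N → EuclideanSpace ℝ (Fin 2) → ℝ) (i : Fin N) (α β : ℝ)
    (w : EuclideanSpace ℝ (Fin 2)) : Prop :=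
  w ∈ Z i ∧ ∀ w' ∈ Z i, C i w - α * w 0 - β * w 1 ≤ C i w' - α * w' 0 - β * w' 1

/-- exactness of the convex relaxation (P3) of the non-convex problem (P2):
a KKT point `(p*, q*, μ̲*, μ̄*)` of (P3), together with the incentive signals
`α* = Rᵀ(μ̲* − μ̄* − γ∇D(v̂(z*)))`, `β* = Xᵀ(μ̲* − μ̄* − γ∇D(v̂(z*)))`, satisfies
(i) each `(p*ᵢ, q*ᵢ)` is the unique best response to `(α*ᵢ, β*ᵢ)`, and
(ii) `F(z*) ≤ F(p, q)` for every point feasible for (P2). -/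
theorem relaxation_exact {N : ℕ} (hN : 1 ≤ N)
    (Z : Fin N → Set (EuclideanSpace ℝ (Fin 2)))
    (hZne : ∀ i, (Z i).Nonempty) (hZcomp : ∀ i, IsCompact (Z i))
    (hZconv : ∀ i, Convex ℝ (Z i))
    (C : Fin N → EuclideanSpace ℝ (Fin 2) → ℝ)
    (C' : Fin N → EuclideanSpace ℝ (Fin 2) → EuclideanSpace ℝ (Fin 2))
    (hCconv : ∀ i, StrictConvexOn ℝ Set.univ (C i))
    (hC : ∀ i x, HasGradientAt (C i) (C' i x) x)
    (D : EuclideanSpace ℝ (Fin N) → ℝ)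
    (D' : EuclideanSpace ℝ (Fin N) → EuclideanSpace ℝ (Fin N))
    (hDconv : ConvexOn ℝ Set.univ D) (hD : ∀ v, HasGradientAt D (D' v) v)
    (γ : ℝ) (hγ : 0 ≤ γ)
    (R X : Matrix (Fin N) (Fin N) ℝ) (a vlo vhi : EuclideanSpace ℝ (Fin N))
    -- the KKT point of (P3)
    (ps qs : EuclideanSpace ℝ (Fin N)) (μlo μhi : EuclideanSpace ℝ (Fin N))
    (hmem : ∀ i, (!₂[ps i, qs i] : EuclideanSpace ℝ (Fin 2)) ∈ Z i)
    (hμlo : ∀ j, 0 ≤ μlo j) (hμhi : ∀ j, 0 ≤ μhi j)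
    -- (a) primal feasibility: v̲ ≤ v̂(z*) ≤ v̄
    (hfeas : ∀ j, vlo j ≤ voltageMap R X a ps qs j ∧ voltageMap R X a ps qs j ≤ vhi j)
    -- (b) complementary slackness
    (hcomplo : ∑ j, μlo j * (voltageMap R X a ps qs j - vlo j) = 0)
    (hcomphi : ∑ j, μhi j * (vhi j - voltageMap R X a ps qs j) = 0)
    -- (c) first-order variational inequality:
    -- ⟨∇ₚF(z*) − Rᵀ(μ̲*−μ̄*), p − p*⟩ + ⟨∇_qF(z*) − Xᵀ(μ̲*−μ̄*), q − q*⟩ ≥ 0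
    (hVI : ∀ p q : EuclideanSpace ℝ (Fin N),
      (∀ i, (!₂[p i, q i] : EuclideanSpace ℝ (Fin 2)) ∈ Z i) →
      0 ≤ (∑ i, (C' i !₂[ps i, qs i] 0
              + γ * Matrix.toEuclideanLin Rᵀ (D' (voltageMap R X a ps qs)) i
              - Matrix.toEuclideanLin Rᵀ (μlo - μhi) i) * (p i - ps i))
         + (∑ i, (C' i !₂[ps i, qs i] 1
              + γ * Matrix.toEuclideanLin Xᵀ (D' (voltageMap R X a ps qs)) i
              - Matrix.toEuclideanLin Xᵀ (μlo - μhi) i) * (q i - qs i))) :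
    -- (i) each (p*ᵢ, q*ᵢ) is the unique best response to the incentive signals (α*ᵢ, β*ᵢ)
    (∀ i, IsBestResponse Z C i
        (Matrix.toEuclideanLin Rᵀ (μlo - μhi - γ • D' (voltageMap R X a ps qs)) i)
        (Matrix.toEuclideanLin Xᵀ (μlo - μhi - γ • D' (voltageMap R X a ps qs)) i)
        !₂[ps i, qs i] ∧
      ∀ w, IsBestResponse Z C i
        (Matrix.toEuclideanLin Rᵀ (μlo - μhi - γ • D' (voltageMap R X a ps qs)) i)
        (Matrix.toEuclideanLin Xᵀ (μlo - μhi - γ • D' (voltageMap R X a ps qs)) i)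
        w → w = !₂[ps i, qs i]) ∧
    -- (ii) global optimality among all points feasible for (P2)
    (∀ p q α β : EuclideanSpace ℝ (Fin N),
      (∀ j, vlo j ≤ voltageMap R X a p q j ∧ voltageMap R X a p q j ≤ vhi j) →
      (∀ i, IsBestResponse Z C i (α i) (β i) !₂[p i, q i]) →
      socialObj C D γ R X a ps qs ≤ socialObj C D γ R X a p q) := by
    classical
  set v := voltageMap R X a ps qs with hv
  -- pointwise complementary slackness
  have hlo0 : ∀ j, μlo j * (v j - vlo j) = 0 := by
    intro j
    exact (Finset.sum_eq_zero_iff_of_nonneg (fun j _ =>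
      mul_nonneg (hμlo j) (sub_nonneg.2 (hfeas j).1))).mp hcomplo j (Finset.mem_univ j)
  have hhi0 : ∀ j, μhi j * (vhi j - v j) = 0 := by
    intro j
    exact (Finset.sum_eq_zero_iff_of_nonneg (fun j _ =>
      mul_nonneg (hμhi j) (sub_nonneg.2 (hfeas j).2))).mp hcomphi j (Finset.mem_univ j)
  have hsig : ∀ (M : Matrix (Fin N) (Fin N) ℝ) (i : Fin N),
      Matrix.toEuclideanLin Mᵀ (μlo - μhi - γ • D' v) i
        = Matrix.toEuclideanLin Mᵀ (μlo - μhi) i - γ * Matrix.toEuclideanLin Mᵀ (D' v) i := by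
    intro M i
    simp [map_sub, map_smul, PiLp.sub_apply, PiLp.smul_apply, smul_eq_mul]
  constructor
  · -- part (i)
    intro i
    have hws : (!₂[ps i, qs i] : EuclideanSpace ℝ (Fin 2)) ∈ Z i := hmem i
    have hkey : ∀ w' ∈ Z i,
        C i !₂[ps i, qs i]
          - Matrix.toEuclideanLin Rᵀ (μlo - μhi - γ • D' v) i * ps i
          - Matrix.toEuclideanLin Xᵀ (μlo - μhi - γ • D' v) i * qs i
        ≤ C i w'
          - Matrix.toEuclideanLin Rᵀ (μlo - μhi - γ • D' v) i * w' 0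
          - Matrix.toEuclideanLin Xᵀ (μlo - μhi - γ • D' v) i * w' 1 := by
      intro w' hw'
      set p' : EuclideanSpace ℝ (Fin N) :=
        (WithLp.equiv 2 (Fin N → ℝ)).symm (fun j => if j = i then w' 0 else ps j) with hp'
      set q' : EuclideanSpace ℝ (Fin N) :=
        (WithLp.equiv 2 (Fin N → ℝ)).symm (fun j => if j = i then w' 1 else qs j) with hq'
      have hp'app : ∀ j, p' j = if j = i then w' 0 else ps j := fun j => rfl
      have hq'app : ∀ j, q' j = if j = i then w' 1 else qs j := fun j => rfl
      have hmem' : ∀ j, (!₂[p' j, q' j] : EuclideanSpace ℝ (Fin 2)) ∈ Z j := by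
        intro j
        by_cases h : j = i
        · subst h
          have he : (!₂[p' j, q' j] : EuclideanSpace ℝ (Fin 2)) = w' := by
            ext k; fin_cases k <;> simp [hp'app, hq'app]
          rwa [he]
        · have he : (!₂[p' j, q' j] : EuclideanSpace ℝ (Fin 2)) = !₂[ps j, qs j] := by
            ext k; fin_cases k <;> simp [hp'app, hq'app, h]
          rw [he]; exact hmem j
      have hvi0 := hVI p' q' hmem'
      rw [Finset.sum_eq_single_of_mem i (Finset.mem_univ i)
          (fun b _ hb => by simp [hp'app, hb]),
        Finset.sum_eq_single_of_mem i (Finset.mem_univ i)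
          (fun b _ hb => by simp [hq'app, hb])] at hvi0
      simp only [hp'app, hq'app, eq_self_iff_true, if_true] at hvi0
      have hg := convex_grad_ineq' (hCconv i).convexOn (hC i !₂[ps i, qs i]) w'
      rw [Fin.sum_univ_two] at hg
      simp only [Matrix.cons_val_zero, Matrix.cons_val_one, Matrix.head_cons] at hg
      have hR := hsig R i
      have hX := hsig X i
      rw [hR, hX]
      linarith
    refine ⟨⟨hws, fun w' hw' => by
      simpa only [Matrix.cons_val_zero, Matrix.cons_val_one, Matrix.head_cons]
        using hkey w' hw'⟩, ?_⟩
    intro w hw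
    by_contra hne
    set α := Matrix.toEuclideanLin Rᵀ (μlo - μhi - γ • D' v) i with hα
    set β := Matrix.toEuclideanLin Xᵀ (μlo - μhi - γ • D' v) i with hβ
    have hmid := hZconv i hw.1 hws (by norm_num : (0:ℝ) ≤ 1/2)
      (by norm_num : (0:ℝ) ≤ 1/2) (by norm_num : (1/2:ℝ) + 1/2 = 1)
    have hstrict := (hCconv i).2 (Set.mem_univ w) (Set.mem_univ !₂[ps i, qs i]) hne
        (by norm_num : (0:ℝ) < 1/2) (by norm_num : (0:ℝ) < 1/2) (by norm_num : (1/2:ℝ) + 1/2 = 1)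
    simp only [smul_eq_mul] at hstrict
    have h1 := hw.2 _ hws
    have h2 := hkey w hw.1
    have h3 := hw.2 _ hmid
    simp only [PiLp.add_apply, PiLp.smul_apply, smul_eq_mul, Matrix.cons_val_zero,
      Matrix.cons_val_one, Matrix.head_cons] at h1 h3
    linarith
  · -- part (ii)
    intro p q α β hfeas' hbr
    set v' := voltageMap R X a p q with hv'
    have hmem' : ∀ i, (!₂[p i, q i] : EuclideanSpace ℝ (Fin 2)) ∈ Z i := fun i => (hbr i).1
    have hgC : (∑ i, C i !₂[ps i, qs i])
        + ((∑ i, C' i !₂[ps i, qs i] 0 * (p i - ps i))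
          + (∑ i, C' i !₂[ps i, qs i] 1 * (q i - qs i)))
        ≤ ∑ i, C i !₂[p i, q i] := by
      have h2 : ∀ i ∈ Finset.univ, C i !₂[ps i, qs i]
          + (C' i !₂[ps i, qs i] 0 * (p i - ps i) + C' i !₂[ps i, qs i] 1 * (q i - qs i))
          ≤ C i !₂[p i, q i] := by
        intro i _
        have h := convex_grad_ineq' (hCconv i).convexOn (hC i !₂[ps i, qs i]) !₂[p i, q i]
        rw [Fin.sum_univ_two] at h
        simpa [Matrix.cons_val_zero, Matrix.cons_val_one, Matrix.head_cons] using h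
      have := Finset.sum_le_sum h2
      simpa only [Finset.sum_add_distrib] using this
    have hgD : D v + ∑ j, D' v j * (v' j - v j) ≤ D v' :=
      convex_grad_ineq' hDconv (hD v) v'
    have hPd := pairing_v R X a (D' v) p q ps qs
    have hPm := pairing_v R X a (μlo - μhi) p q ps qs
    rw [← hv, ← hv'] at hPd hPm
    have hU : 0 ≤ ∑ j, (μlo - μhi) j * (v' j - v j) := by
      refine Finset.sum_nonneg fun j _ => ?_
      have e : (μlo - μhi) j * (v' j - v j)
          = μlo j * (v' j - vlo j) + μhi j * (vhi j - v' j)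
            - μlo j * (v j - vlo j) - μhi j * (vhi j - v j) := by
        simp only [PiLp.sub_apply]; ring
      rw [e, hlo0 j, hhi0 j]
      have t1 := mul_nonneg (hμlo j) (sub_nonneg.2 (hfeas' j).1)
      have t2 := mul_nonneg (hμhi j) (sub_nonneg.2 (hfeas' j).2)
      linarith
    have hvi := hVI p q hmem'
    simp only [add_mul, sub_mul, Finset.sum_add_distrib, Finset.sum_sub_distrib,
      mul_assoc] at hvi
    rw [← Finset.mul_sum, ← Finset.mul_sum] at hvi
    have hPd' := congrArg (fun t => γ * t) hPd
    simp only [mul_add] at hPd'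
    have hγD := mul_le_mul_of_nonneg_left hgD hγ
    simp only [mul_add] at hγD
    simp only [socialObj, ← hv, ← hv']
    linarith
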